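/- arXiv:1903.06459 — 5 statements merged into one kernel-verified Lean document; each statement's English description precedes it below -/
import Mathlib

section
/- For every normed space X over 𝕜, the range of the canonical embedding j_{X*} : X* → X*** and the annihilator (j_X(X))⁰ = {ξ ∈ X*** : ξ ∘ j_X = 0} of the image of j_X are closed complementary subspaces of X***; that is, X*** is the internal topological direct sum of the closed subspace j_{X*}(X*) and the closed subspace (j_X(X))⁰. -/
open NormedSpace

/-- The topological dual `E →L[𝕜] 𝕜` (the old `NormedSpace.Dual`, removed from Mathlib). -/
abbrev NormedSpace.Dual (𝕜 : Type*) [NontriviallyNormedField 𝕜] (E : Type*) [SeminormedAddCommGroup E]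
    [NormedSpace 𝕜 E] : Type _ := E →L[𝕜] 𝕜

/-- The dual map `f ↦ f*`, where `f*(g) = g ∘ f`. -/
noncomputable def dualMapCLM {𝕜 : Type*} [RCLike 𝕜] {X Y : Type*} [SeminormedAddCommGroup X]
    [NormedSpace 𝕜 X] [SeminormedAddCommGroup Y] [NormedSpace 𝕜 Y] (f : X →L[𝕜] Y) :
    Dual 𝕜 Y →L[𝕜] Dual 𝕜 X :=
  (ContinuousLinearMap.compL 𝕜 X Y 𝕜).flip f

/-- The annihilator of the image of `j_X : X → X**` inside `X***`:
`{ξ : X*** | ξ ∘ j_X = 0}`, i.e. the kernel of the dual map `(j_X)* : X*** → X*`. -/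
noncomputable def annOfImage (𝕜 : Type*) [RCLike 𝕜] (X : Type*) [NormedAddCommGroup X]
    [NormedSpace 𝕜 X] : Submodule 𝕜 (Dual 𝕜 (Dual 𝕜 (Dual 𝕜 X))) :=
  LinearMap.ker (dualMapCLM (inclusionInDoubleDual 𝕜 X)).toLinearMap

/-- For every normed space `X` over `𝕜 ∈ {ℝ, ℂ}`, the range of the canonical
embedding `j_{X*} : X* → X***` and the annihilator `(j_X(X))⁰ = {ξ : X*** | ξ ∘ j_X = 0}` are
closed complementary subspaces of `X***`. -/
theorem range_inclusion_isCompl_annihilator (𝕜 : Type*) [RCLike 𝕜]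
    (X : Type*) [NormedAddCommGroup X] [NormedSpace 𝕜 X] :
    (∀ ξ : Dual 𝕜 (Dual 𝕜 (Dual 𝕜 X)),
      ξ ∈ annOfImage 𝕜 X ↔ ∀ x : X, ξ (inclusionInDoubleDual 𝕜 X x) = 0) ∧
    IsClosed ((LinearMap.range (inclusionInDoubleDual 𝕜 (Dual 𝕜 X)).toLinearMap :
      Submodule 𝕜 (Dual 𝕜 (Dual 𝕜 (Dual 𝕜 X)))) : Set (Dual 𝕜 (Dual 𝕜 (Dual 𝕜 X)))) ∧
    IsClosed ((annOfImage 𝕜 X : Submodule 𝕜 (Dual 𝕜 (Dual 𝕜 (Dual 𝕜 X)))) :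
      Set (Dual 𝕜 (Dual 𝕜 (Dual 𝕜 X)))) ∧
    IsCompl (LinearMap.range (inclusionInDoubleDual 𝕜 (Dual 𝕜 X)).toLinearMap) (annOfImage 𝕜 X) := by
  classical
  set J1 := inclusionInDoubleDual 𝕜 X with hJ1
  set J2 := inclusionInDoubleDual 𝕜 (Dual 𝕜 X) with hJ2
  set D := dualMapCLM (𝕜 := 𝕜) (X := X) (Y := Dual 𝕜 (Dual 𝕜 X)) J1 with hD
  have hDJ2 : ∀ f : Dual 𝕜 X, D (J2 f) = f := by
    intro f
    ext x
    rfl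
  refine ⟨?_, ?_, ?_, ?_⟩
  · intro ξ
    constructor
    · intro hξ x
      have : D ξ = 0 := hξ
      have := congrArg (fun g => g x) this
      exact this
    · intro h
      show D ξ = 0
      ext x
      exact h x
  · set P : Dual 𝕜 (Dual 𝕜 (Dual 𝕜 X)) →L[𝕜] Dual 𝕜 (Dual 𝕜 (Dual 𝕜 X)) := J2.comp D with hP
    have heq : ((LinearMap.range (J2 : Dual 𝕜 X →L[𝕜] Dual 𝕜 (Dual 𝕜 (Dual 𝕜 X))).toLinearMap) :
        Set (Dual 𝕜 (Dual 𝕜 (Dual 𝕜 X)))) =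
        (LinearMap.ker (ContinuousLinearMap.id 𝕜 (Dual 𝕜 (Dual 𝕜 (Dual 𝕜 X))) - P).toLinearMap :
          Submodule 𝕜 (Dual 𝕜 (Dual 𝕜 (Dual 𝕜 X)))) := by
      ext ξ
      simp only [SetLike.mem_coe, LinearMap.mem_range, LinearMap.mem_ker]
      constructor
      · rintro ⟨f, rfl⟩
        show J2 f - J2 (D (J2 f)) = 0
        rw [hDJ2]; exact sub_self (J2 f)
      · intro h
        refine ⟨D ξ, ?_⟩
        have : ξ - J2 (D ξ) = 0 := h
        have := sub_eq_zero.mp this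
        exact this.symm
    rw [heq]
    set_option synthInstance.maxHeartbeats 400000 in
    exact ContinuousLinearMap.isClosed_ker _
  · exact ContinuousLinearMap.isClosed_ker D
  · constructor
    · rw [disjoint_iff_inf_le]
      rintro ξ ⟨⟨f, rfl⟩, hker⟩
      have : D (J2 f) = 0 := hker
      rw [hDJ2] at this
      simp [this]
    · rw [codisjoint_iff_le_sup]
      intro ξ _
      have h1 : J2 (D ξ) ∈ LinearMap.range (J2 : Dual 𝕜 X →L[𝕜] _).toLinearMap := ⟨D ξ, rfl⟩
      have h2 : ξ - J2 (D ξ) ∈ annOfImage 𝕜 X := by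
        show D (ξ - J2 (D ξ)) = 0
        rw [map_sub, hDJ2, sub_self]
      have : ξ = J2 (D ξ) + (ξ - J2 (D ξ)) := by abel
      rw [this]
      exact Submodule.add_mem_sup h1 h2
end

section
/- Let X be a normed space over 𝕜 such that there exist a normed space Y over 𝕜 and a continuous linear equivalence between X and Y*. Then X is complete (a Banach space), there exists a continuous linear map r : X** → X with r ∘ j_X = id_X, and the range of j_X is a closed subspace of X** admitting a closed direct complement (i.e., it is complemented in X**). -/
open NormedSpace

/-- If a normed space `X` over `𝕜 ∈ {ℝ, ℂ}` is continuously linearly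
equivalent to the dual of some normed space `Y`, then `X` is a Banach space, the canonical
embedding `j_X : X → X**` admits a continuous linear left inverse (retraction) `r : X** → X`,
and the range of `j_X` is a closed subspace of `X**` admitting a closed direct complement. -/
theorem complete_retract_complemented_of_equiv_dual {𝕜 : Type*} [RCLike 𝕜]
    {X Y : Type*} [NormedAddCommGroup X] [NormedSpace 𝕜 X]
    [NormedAddCommGroup Y] [NormedSpace 𝕜 Y]
    (e : X ≃L[𝕜] StrongDual 𝕜 Y) :
    CompleteSpace X ∧
    (∃ r : StrongDual 𝕜 (StrongDual 𝕜 X) →L[𝕜] X,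
      r.comp (inclusionInDoubleDual 𝕜 X) = ContinuousLinearMap.id 𝕜 X) ∧
    IsClosed (Set.range ⇑(inclusionInDoubleDual 𝕜 X)) ∧
    (∃ W : Submodule 𝕜 (StrongDual 𝕜 (StrongDual 𝕜 X)),
      IsClosed (W : Set (StrongDual 𝕜 (StrongDual 𝕜 X))) ∧
      IsCompl (LinearMap.range (inclusionInDoubleDual 𝕜 X : X →ₗ[𝕜] StrongDual 𝕜 (StrongDual 𝕜 X))) W) := by
  -- completeness
  have hcomp : CompleteSpace X := by
    have : IsUniformEmbedding e.toEquiv.symm := e.symm.isUniformEmbedding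
    exact (completeSpace_congr this).1 inferInstance
  -- the retraction
  set A : Y →L[𝕜] StrongDual 𝕜 X := (e : X →L[𝕜] StrongDual 𝕜 Y).flip with hA
  set g : StrongDual 𝕜 (StrongDual 𝕜 X) →L[𝕜] StrongDual 𝕜 Y :=
    (ContinuousLinearMap.compL 𝕜 Y (StrongDual 𝕜 X) 𝕜).flip A with hg
  set r : StrongDual 𝕜 (StrongDual 𝕜 X) →L[𝕜] X :=
    (e.symm : StrongDual 𝕜 Y →L[𝕜] X).comp g with hr
  have hret : r.comp (inclusionInDoubleDual 𝕜 X) = ContinuousLinearMap.id 𝕜 X := by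
    ext x
    have : g (inclusionInDoubleDual 𝕜 X x) = e x := by
      ext y
      simp [hg, hA, inclusionInDoubleDual]
    simp [hr, this]
  refine ⟨hcomp, ⟨r, hret⟩, ?_⟩
  have hcc : Submodule.ClosedComplemented (R := 𝕜) (M := StrongDual 𝕜 (StrongDual 𝕜 X)) (LinearMap.range (inclusionInDoubleDual 𝕜 X : X →ₗ[𝕜] StrongDual 𝕜 (StrongDual 𝕜 X))) := by
    refine ⟨((inclusionInDoubleDual 𝕜 X).comp r).codRestrict _ ?_, ?_⟩
    · intro Φ
      exact LinearMap.mem_range_self _ _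
    · rintro ⟨Φ, x, rfl⟩
      have hx : r (inclusionInDoubleDual 𝕜 X x) = x :=
        DFunLike.congr_fun hret x
      ext
      exact congrArg (fun y => (inclusionInDoubleDual 𝕜 X y) _) hx
  refine ⟨?_, hcc.exists_isClosed_isCompl⟩
  have := hcc.isClosed
  simpa [Set.range, LinearMap.coe_range] using this
end

section
/- There exists a Banach space X over ℝ such that for every normed space Y over ℝ there is no continuous linear equivalence between X and the dual space Y*; that is, X is not isomorphic (as a topological vector space, via a continuous linear isomorphism) to the dual of any normed space. -/
open Filter Set Topology

noncomputable section

namespace NotADual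

abbrev c0 : Type := ZeroAtInftyContinuousMap ℕ ℝ

/-- The element of `c0` supported on the finset `S` with values `σ`. -/
def ind (S : Finset ℕ) (σ : ℕ → ℝ) : c0 where
  toFun := fun n => if n ∈ S then σ n else 0
  continuous_toFun := continuous_of_discreteTopology
  zero_at_infty' := by
    rw [cocompact_eq_cofinite]
    have h : ∀ᶠ n in cofinite, (if n ∈ S then σ n else 0) = 0 := by
      filter_upwards [S.finite_toSet.compl_mem_cofinite] with n hn
      simp [Set.mem_compl_iff, Finset.mem_coe] at hn
      simp [hn]
    exact tendsto_const_nhds.congr' (h.mono fun n hn => hn.symm)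

@[simp] lemma ind_apply (S : Finset ℕ) (σ : ℕ → ℝ) (n : ℕ) :
    ind S σ n = if n ∈ S then σ n else 0 := rfl

/-- The `k`-th standard basis vector of `c0`. -/
def e (k : ℕ) : c0 := ind {k} (fun _ => 1)

@[simp] lemma e_apply (k n : ℕ) : e k n = if n = k then 1 else 0 := by
  simp [e, Finset.mem_singleton]

lemma norm_ind_le (S : Finset ℕ) (σ : ℕ → ℝ) (h : ∀ k, |σ k| ≤ 1) : ‖ind S σ‖ ≤ 1 := by
  rw [← ZeroAtInftyContinuousMap.norm_toBCF_eq_norm]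
  refine (BoundedContinuousFunction.norm_le zero_le_one).2 fun n => ?_
  show ‖ind S σ n‖ ≤ 1
  rw [ind_apply, Real.norm_eq_abs]
  split
  · exact h n
  · simp

lemma abs_apply_le_norm (x : c0) (n : ℕ) : |x n| ≤ ‖x‖ := by
  rw [← ZeroAtInftyContinuousMap.norm_toBCF_eq_norm]
  exact (x.toBCF.norm_coe_le_norm n : _)



lemma ind_eq_sum (S : Finset ℕ) (σ : ℕ → ℝ) : ind S σ = ∑ k ∈ S, σ k • e k := by
  classical
  induction S using Finset.induction with
  | empty =>
    ext n; simp [ind_apply]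
  | insert a S ha ih =>
    ext n
    rw [Finset.sum_insert ha]
    have h1 : ((σ a • e a + ∑ k ∈ S, σ k • e k : c0)) n
        = σ a * (e a n) + (ind S σ) n := by
      rw [← ih]; rfl
    rw [h1, ind_apply, ind_apply, e_apply]
    by_cases hn : n = a
    · subst hn; simp [ha]
    · simp [hn, Finset.mem_insert]

lemma sum_abs_le (f : c0 →L[ℝ] ℝ) (S : Finset ℕ) : ∑ k ∈ S, |f (e k)| ≤ ‖f‖ := by
  classical
  set σ : ℕ → ℝ := fun k => if 0 ≤ f (e k) then 1 else -1 with hσ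
  have habs : ∀ k, |σ k| ≤ 1 := by
    intro k; by_cases h : 0 ≤ f (e k) <;> simp [hσ, h]
  have h1 : f (ind S σ) = ∑ k ∈ S, |f (e k)| := by
    rw [ind_eq_sum, map_sum]
    refine Finset.sum_congr rfl fun k _ => ?_
    rw [map_smul, smul_eq_mul]
    by_cases h : 0 ≤ f (e k)
    · simp [hσ, h, abs_of_nonneg h]
    · simp [hσ, h, abs_of_neg (lt_of_not_ge h)]
  calc ∑ k ∈ S, |f (e k)| = f (ind S σ) := h1.symm
    _ ≤ |f (ind S σ)| := le_abs_self _
    _ ≤ ‖f‖ * ‖ind S σ‖ := f.le_opNorm _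
    _ ≤ ‖f‖ * 1 := by
        exact mul_le_mul_of_nonneg_left (norm_ind_le S σ habs) (norm_nonneg f)
    _ = ‖f‖ := mul_one _

lemma summable_abs_e (f : c0 →L[ℝ] ℝ) : Summable (fun k => |f (e k)|) :=
  summable_of_sum_le (fun k => abs_nonneg _) (fun S => sum_abs_le f S)

lemma tsum_abs_e_le (f : c0 →L[ℝ] ℝ) : ∑' k, |f (e k)| ≤ ‖f‖ :=
  Summable.tsum_le_of_sum_le (summable_abs_e f) (fun S => sum_abs_le f S)



section Main

variable {Y : Type} [NormedAddCommGroup Y] [NormedSpace ℝ Y]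
variable (T : c0 ≃L[ℝ] StrongDual ℝ Y)

/-- `J y` is the functional `x ↦ T x y` on `c0`. -/
def J (y : Y) : c0 →L[ℝ] ℝ := (T : c0 →L[ℝ] StrongDual ℝ Y).flip y

@[simp] lemma J_apply (y : Y) (x : c0) : J T y x = T x y := rfl

lemma norm_J_le (y : Y) : ‖J T y‖ ≤ ‖(T : c0 →L[ℝ] StrongDual ℝ Y)‖ * ‖y‖ := by
  refine ContinuousLinearMap.opNorm_le_bound _
    (mul_nonneg (norm_nonneg (T : c0 →L[ℝ] StrongDual ℝ Y)) (norm_nonneg y)) fun x => ?_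
  have h1 : ‖J T y x‖ ≤ ‖T x‖ * ‖y‖ := (T x).le_opNorm y
  have h2 : ‖T x‖ ≤ ‖(T : c0 →L[ℝ] StrongDual ℝ Y)‖ * ‖x‖ :=
    (T : c0 →L[ℝ] StrongDual ℝ Y).le_opNorm x
  calc ‖J T y x‖ ≤ ‖T x‖ * ‖y‖ := h1
    _ ≤ (‖(T : c0 →L[ℝ] StrongDual ℝ Y)‖ * ‖x‖) * ‖y‖ :=
        mul_le_mul_of_nonneg_right h2 (norm_nonneg _)
    _ = ‖(T : c0 →L[ℝ] StrongDual ℝ Y)‖ * ‖y‖ * ‖x‖ := by ring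

lemma summable_ind (A : Set ℕ) (y : Y) :
    Summable (A.indicator fun k => T (e k) y) := by
  have h : Summable (fun k => T (e k) y) := by
    have := (summable_abs_e (J T y))
    exact (summable_abs_iff).1 this
  exact h.indicator A

lemma summable_abs_ind (A : Set ℕ) (y : Y) :
    Summable (fun k => |A.indicator (fun k => T (e k) y) k|) := by
  refine ((summable_abs_e (J T y)).indicator A).congr fun k => ?_
  by_cases hk : k ∈ A <;> simp [Set.indicator, hk]

/-- The linear functional `y ↦ ∑_{k ∈ A} (T eₖ) y`. -/
def G (A : Set ℕ) : StrongDual ℝ Y :=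
  LinearMap.mkContinuous
    { toFun := fun y => ∑' k, A.indicator (fun k => T (e k) y) k
      map_add' := by
        intro y z
        have h : ∀ k, A.indicator (fun k => T (e k) (y + z)) k
            = A.indicator (fun k => T (e k) y) k + A.indicator (fun k => T (e k) z) k := by
          intro k
          by_cases hk : k ∈ A <;> simp [Set.indicator, hk]
        rw [tsum_congr h]
        exact Summable.tsum_add (summable_ind T A y) (summable_ind T A z)
      map_smul' := by
        intro c y
        have h : ∀ k, A.indicator (fun k => T (e k) (c • y)) k
            = c * A.indicator (fun k => T (e k) y) k := by
          intro k
          by_cases hk : k ∈ A <;> simp [Set.indicator, hk]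
        rw [tsum_congr h, tsum_mul_left]
        rfl }
    ‖(T : c0 →L[ℝ] StrongDual ℝ Y)‖
    (by
      intro y
      simp only [LinearMap.coe_mk, AddHom.coe_mk]
      have h1 : ‖∑' k, A.indicator (fun k => T (e k) y) k‖
          ≤ ∑' k, |A.indicator (fun k => T (e k) y) k| := by
        simpa [Real.norm_eq_abs] using
          norm_tsum_le_tsum_norm (f := A.indicator fun k => T (e k) y)
            (by simpa [Real.norm_eq_abs] using summable_abs_ind T A y)
      have h2 : ∑' k, |A.indicator (fun k => T (e k) y) k| ≤ ∑' k, |T (e k) y| := by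
        refine Summable.tsum_le_tsum (fun k => ?_) (summable_abs_ind T A y) (summable_abs_e (J T y))
        by_cases hk : k ∈ A <;> simp [Set.indicator, hk, abs_nonneg]
      have h3 : ∑' k, |T (e k) y| ≤ ‖J T y‖ := tsum_abs_e_le (J T y)
      have h4 := norm_J_le T y
      rw [Real.norm_eq_abs] at h1 ⊢
      linarith)

lemma G_apply (A : Set ℕ) (y : Y) :
    G T A y = ∑' k, A.indicator (fun k => T (e k) y) k := rfl

lemma norm_G_le (A : Set ℕ) : ‖G T A‖ ≤ ‖(T : c0 →L[ℝ] StrongDual ℝ Y)‖ :=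
  LinearMap.mkContinuous_norm_le _ (norm_nonneg (T : c0 →L[ℝ] StrongDual ℝ Y)) _

/-- The element of `c0` mapped by `T` to `G A`. -/
def xA (A : Set ℕ) : c0 := T.symm (G T A)

/-- The coordinate finitely additive measures. -/
def mu (n : ℕ) (A : Set ℕ) : ℝ := xA T A n

lemma G_union (A B : Set ℕ) (h : Disjoint A B) : G T (A ∪ B) = G T A + G T B := by
  refine ContinuousLinearMap.ext fun y => ?_
  have h1 : ∀ k, (A ∪ B).indicator (fun k => T (e k) y) k
      = A.indicator (fun k => T (e k) y) k + B.indicator (fun k => T (e k) y) k := by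
    intro k
    rw [Set.indicator_union_of_disjoint h]
  rw [ContinuousLinearMap.add_apply, G_apply, G_apply, G_apply, tsum_congr h1]
  exact Summable.tsum_add (summable_ind T A y) (summable_ind T B y)

lemma mu_union (n : ℕ) (A B : Set ℕ) (h : Disjoint A B) :
    mu T n (A ∪ B) = mu T n A + mu T n B := by
  have h1 : xA T (A ∪ B) = xA T A + xA T B := by
    rw [xA, xA, xA, G_union T A B h, map_add]
  simp only [mu, h1]
  rfl

lemma G_finset (S : Finset ℕ) : G T ↑S = T (ind S fun _ => 1) := by
  refine ContinuousLinearMap.ext fun y => ?_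
  have h1 : G T ↑S y = ∑ k ∈ S, T (e k) y := by
    rw [G_apply]
    rw [tsum_eq_sum (s := S) (fun k hk => Set.indicator_of_notMem (by simpa using hk) _)]
    exact Finset.sum_congr rfl fun k hk => Set.indicator_of_mem (by simpa using hk) _
  have h2 : T (ind S fun _ => 1) y = ∑ k ∈ S, T (e k) y := by
    rw [ind_eq_sum, map_sum, ContinuousLinearMap.sum_apply]
    exact Finset.sum_congr rfl fun k _ => by
      rw [map_smul]; simp
  rw [h1, h2]

lemma mu_finset (n : ℕ) (S : Finset ℕ) : mu T n ↑S = if n ∈ S then 1 else 0 := by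
  have h1 : xA T ↑S = ind S fun _ => 1 := by
    rw [xA, G_finset]
    exact T.symm_apply_apply _
  simp [mu, h1]

lemma abs_mu_le (n : ℕ) (A : Set ℕ) :
    |mu T n A| ≤ ‖(T.symm : StrongDual ℝ Y →L[ℝ] c0)‖
      * ‖(T : c0 →L[ℝ] StrongDual ℝ Y)‖ := by
  have h1 : |mu T n A| ≤ ‖xA T A‖ := abs_apply_le_norm _ n
  have h2 : ‖xA T A‖ ≤ ‖(T.symm : StrongDual ℝ Y →L[ℝ] c0)‖ * ‖G T A‖ :=
    (T.symm : StrongDual ℝ Y →L[ℝ] c0).le_opNorm _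
  have h3 := norm_G_le T A
  have h0 : (0:ℝ) ≤ ‖(T.symm : StrongDual ℝ Y →L[ℝ] c0)‖ := ContinuousLinearMap.opNorm_nonneg _
  nlinarith [mul_le_mul_of_nonneg_left h3 h0]

lemma tendsto_mu (A : Set ℕ) : Tendsto (fun n => mu T n A) atTop (𝓝 0) := by
  have h := (xA T A).zero_at_infty'
  rw [cocompact_eq_cofinite, Nat.cofinite_eq_atTop] at h
  exact h

end Main

section Combinatorial

/-- Additivity over finite disjoint unions. -/
lemma nu_biUnion (ν : Set ℕ → ℝ)
    (hadd : ∀ A B, Disjoint A B → ν (A ∪ B) = ν A + ν B) (hempty : ν ∅ = 0)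
    {ι : Type} [DecidableEq ι] (f : ι → Set ℕ) (J : Finset ι)
    (hdisj : ∀ i ∈ J, ∀ j ∈ J, i ≠ j → Disjoint (f i) (f j)) :
    ν (⋃ j ∈ J, f j) = ∑ j ∈ J, ν (f j) := by
  classical
  induction J using Finset.induction with
  | empty => simpa using hempty
  | insert a J ha ih =>
    have hd : Disjoint (f a) (⋃ j ∈ J, f j) := by
      refine Set.disjoint_iUnion₂_right.2 fun j hj => ?_
      exact hdisj a (Finset.mem_insert_self a J) j (Finset.mem_insert_of_mem hj)
        (fun h => ha (h ▸ hj))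
    rw [Finset.set_biUnion_insert, hadd _ _ hd, Finset.sum_insert ha,
      ih (fun i hi j hj hij => hdisj i (Finset.mem_insert_of_mem hi)
        j (Finset.mem_insert_of_mem hj) hij)]

/-- Given a bounded finitely additive `ν` and an infinite `R`, we can find an infinite
subset on whose subsets `ν` is uniformly small. -/
lemma shrink (ν : Set ℕ → ℝ) (M : ℝ)
    (hadd : ∀ A B, Disjoint A B → ν (A ∪ B) = ν A + ν B) (hempty : ν ∅ = 0)
    (hbd : ∀ A, |ν A| ≤ M) (R : Set ℕ) (hR : R.Infinite) {ε : ℝ} (hε : 0 < ε) :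
    ∃ R', R' ⊆ R ∧ R'.Infinite ∧ ∀ S ⊆ R', |ν S| ≤ ε := by
  classical
  by_contra hcon
  push_neg at hcon
  obtain ⟨q, hq⟩ := exists_nat_gt (M / ε)
  have hM : M < q * ε := by
    rw [div_lt_iff₀ hε] at hq; linarith
  set p := 2 * q with hp
  have hq1 : 1 ≤ q := by
    by_contra hq1
    have : q = 0 := by omega
    subst this
    have := hbd ∅
    rw [hempty, abs_zero] at this
    simp only [Nat.cast_zero, zero_mul] at hM
    linarith
  have hp0 : 0 < p := by omega
  -- the disjoint infinite pieces
  set emb := hR.natEmbedding with hemb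
  set F : ℕ → Set ℕ := fun j => Set.range (fun i : ℕ => ((emb (i * p + j) : ℕ))) with hF
  have hFsub : ∀ j, F j ⊆ R := by
    rintro j x ⟨i, rfl⟩
    exact (emb (i * p + j)).2
  have hFinf : ∀ j, (F j).Infinite := by
    intro j
    apply Set.infinite_range_of_injective
    intro i₁ i₂ h
    have h2 : i₁ * p + j = i₂ * p + j := emb.injective (Subtype.coe_injective h)
    have h3 : i₁ * p = i₂ * p := by omega
    exact Nat.eq_of_mul_eq_mul_right hp0 h3
  have hFdisj : ∀ j₁ < p, ∀ j₂ < p, j₁ ≠ j₂ → Disjoint (F j₁) (F j₂) := by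
    intro j₁ hj₁ j₂ hj₂ hne
    rw [Set.disjoint_left]
    rintro x ⟨i₁, rfl⟩ ⟨i₂, hx⟩
    have h2 : i₂ * p + j₂ = i₁ * p + j₁ := emb.injective (Subtype.coe_injective hx)
    have h3 : (i₂ * p + j₂) % p = (i₁ * p + j₁) % p := by rw [h2]
    have e1 : (i₂ * p + j₂) % p = j₂ := by
      rw [add_comm, Nat.add_mul_mod_self_right, Nat.mod_eq_of_lt hj₂]
    have e2 : (i₁ * p + j₁) % p = j₁ := by
      rw [add_comm, Nat.add_mul_mod_self_right, Nat.mod_eq_of_lt hj₁]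
    rw [e1, e2] at h3
    exact hne h3.symm
  -- select bad subsets
  choose Sel hSel1 hSel2 using fun j => hcon (F j) (hFsub j) (hFinf j)
  set P := (Finset.range p).filter (fun j => ε < ν (Sel j)) with hP
  set N := (Finset.range p).filter (fun j => ν (Sel j) < -ε) with hN
  have hPN : ∀ j ∈ Finset.range p, j ∈ P ∪ N := by
    intro j hj
    rcases lt_abs.1 (hSel2 j) with h | h
    · exact Finset.mem_union_left _ (Finset.mem_filter.2 ⟨hj, h⟩)
    · exact Finset.mem_union_right _ (Finset.mem_filter.2 ⟨hj, by linarith⟩)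
  have hcard : p ≤ P.card + N.card := by
    calc p = (Finset.range p).card := (Finset.card_range p).symm
      _ ≤ (P ∪ N).card := Finset.card_le_card (fun j hj => hPN j hj)
      _ ≤ P.card + N.card := Finset.card_union_le P N
  have hsum : ∀ Q : Finset ℕ, Q ⊆ Finset.range p →
      ν (⋃ j ∈ Q, Sel j) = ∑ j ∈ Q, ν (Sel j) := by
    intro Q hQ
    refine nu_biUnion ν hadd hempty Sel Q fun i hi j hj hij => ?_
    exact Set.disjoint_of_subset (hSel1 i) (hSel1 j)
      (hFdisj i (Finset.mem_range.1 (hQ hi)) j (Finset.mem_range.1 (hQ hj)) hij)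
  have hqP : q ≤ P.card ∨ q ≤ N.card := by omega
  rcases hqP with h | h
  · have h1 : (q : ℝ) * ε ≤ ∑ j ∈ P, ν (Sel j) := by
      have h2 : ∀ j ∈ P, ε ≤ ν (Sel j) := fun j hj =>
        le_of_lt (Finset.mem_filter.1 hj).2
      calc (q:ℝ) * ε ≤ (P.card : ℝ) * ε := by
            exact mul_le_mul_of_nonneg_right (Nat.cast_le.2 h) hε.le
        _ ≤ ∑ j ∈ P, ν (Sel j) := by
            have h5 := Finset.card_nsmul_le_sum P (fun j => ν (Sel j)) ε h2
            rwa [nsmul_eq_mul] at h5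
    have h3 := hbd (⋃ j ∈ P, Sel j)
    rw [hsum P (Finset.filter_subset _ _)] at h3
    have := abs_le.1 h3
    linarith
  · have h1 : ∑ j ∈ N, ν (Sel j) ≤ -((q : ℝ) * ε) := by
      have h2 : ∀ j ∈ N, ν (Sel j) ≤ -ε := fun j hj =>
        le_of_lt (Finset.mem_filter.1 hj).2
      have h4 := Finset.sum_le_card_nsmul N (fun j => ν (Sel j)) (-ε) h2
      rw [nsmul_eq_mul] at h4
      have h5 : (q:ℝ) ≤ N.card := Nat.cast_le.2 h
      nlinarith
    have h3 := hbd (⋃ j ∈ N, Sel j)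
    rw [hsum N (Finset.filter_subset _ _)] at h3
    have := abs_le.1 h3
    linarith

end Combinatorial
section Phillips

variable (μ : ℕ → Set ℕ → ℝ)

/-- The property of one step of the recursive construction. -/
def Good (n' b : ℕ) (R R' : Set ℕ) : Prop :=
  b < n' ∧ n' ∈ R ∧ R' ⊆ R ∧ (∀ x ∈ R', n' < x) ∧ R'.Infinite ∧
    ∀ S ⊆ R', |μ n' S| ≤ 1/4

lemma exists_step (M : ℝ)
    (hadd : ∀ n A B, Disjoint A B → μ n (A ∪ B) = μ n A + μ n B)
    (hempty : ∀ n, μ n ∅ = 0) (hbd : ∀ n A, |μ n A| ≤ M)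
    (b : ℕ) (R : Set ℕ) (hR : R.Infinite) :
    ∃ n' R', Good μ n' b R R' := by
  have h1 : (R \ Iic b).Infinite := hR.diff (finite_Iic b)
  obtain ⟨n', hn'⟩ := h1.nonempty
  have h2 : (R \ Iic n').Infinite := hR.diff (finite_Iic n')
  obtain ⟨R', hsub, hinf, hsmall⟩ :=
    shrink (μ n') M (hadd n') (hempty n') (hbd n') _ h2 (by norm_num : (0:ℝ) < 1/4)
  refine ⟨n', R', ?_, hn'.1, fun x hx => (hsub hx).1, ?_, hinf, hsmall⟩
  · simpa using hn'.2
  · intro x hx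
    have := (hsub hx).2
    simpa using this

/-- One step of the recursive construction, as a function. -/
noncomputable def stepFn
    (hstep : ∀ (b : ℕ) (R : Set ℕ), R.Infinite → ∃ n' R', Good μ n' b R R') :
    (ℕ × {R : Set ℕ // R.Infinite}) → ℕ × {R : Set ℕ // R.Infinite} := fun s =>
  ⟨(hstep s.1 s.2.1 s.2.2).choose,
    ⟨(hstep s.1 s.2.1 s.2.2).choose_spec.choose,
      (hstep s.1 s.2.1 s.2.2).choose_spec.choose_spec.2.2.2.2.1⟩⟩

lemma stepFn_good
    (hstep : ∀ (b : ℕ) (R : Set ℕ), R.Infinite → ∃ n' R', Good μ n' b R R')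
    (s : ℕ × {R : Set ℕ // R.Infinite}) :
    Good μ (stepFn μ hstep s).1 s.1 s.2.1 (stepFn μ hstep s).2.1 :=
  (hstep s.1 s.2.1 s.2.2).choose_spec.choose_spec

theorem phillips (M : ℝ)
    (hadd : ∀ n A B, Disjoint A B → μ n (A ∪ B) = μ n A + μ n B)
    (hbd : ∀ n A, |μ n A| ≤ M)
    (hfin : ∀ n (S : Finset ℕ), μ n ↑S = if n ∈ S then 1 else 0)
    (hten : ∀ A, Tendsto (fun n => μ n A) atTop (𝓝 0)) : False := by
  classical
  have hempty : ∀ n, μ n ∅ = 0 := fun n => by simpa using hfin n ∅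
  have hstep := exists_step μ M hadd hempty hbd
  set init : ℕ × {R : Set ℕ // R.Infinite} := ⟨0, ⟨univ, infinite_univ⟩⟩ with hinit
  set it : ℕ → ℕ × {R : Set ℕ // R.Infinite} :=
    fun j => (stepFn μ hstep)^[j+1] init with hit
  have hitsucc : ∀ j, it (j+1) = stepFn μ hstep (it j) := by
    intro j
    rw [hit]
    exact Function.iterate_succ_apply' (stepFn μ hstep) (j+1) init
  set m : ℕ → ℕ := fun j => (it j).1 with hm
  set Rs : ℕ → Set ℕ := fun j => ((it j).2 : Set ℕ) with hRs
  have hgood0 : Good μ (m 0) 0 univ (Rs 0) := by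
    have := stepFn_good μ hstep init
    simpa [hm, hRs, hit, hinit] using this
  have hgood : ∀ j, Good μ (m (j+1)) (m j) (Rs j) (Rs (j+1)) := by
    intro j
    have := stepFn_good μ hstep (it j)
    rw [← hitsucc j] at this
    exact this
  -- basic invariants
  have hmono : StrictMono m :=
    strictMono_nat_of_lt_succ fun j => (hgood j).1
  have hsub : ∀ j, Rs (j+1) ⊆ Rs j := fun j => (hgood j).2.2.1
  have hsub' : ∀ i j, i ≤ j → Rs j ⊆ Rs i := by
    intro i j hij
    induction j with
    | zero => simpa [Nat.le_zero.1 hij]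
    | succ j ih =>
      rcases Nat.lt_or_ge i (j+1) with h | h
      · exact (hsub j).trans (ih (by omega))
      · have : i = j + 1 := by omega
        subst this; exact fun x hx => hx
  have hmem : ∀ j k, m (j+k+1) ∈ Rs j := by
    intro j k
    induction k with
    | zero => exact (hgood j).2.1
    | succ k ih =>
      have h1 : m (j+k+2) ∈ Rs (j+k+1) := (hgood (j+k+1)).2.1
      exact hsub' j (j+k+1) (by omega) h1
  have hsmall : ∀ j, ∀ S ⊆ Rs j, |μ (m j) S| ≤ 1/4 := by
    intro j
    cases j with
    | zero => exact hgood0.2.2.2.2.2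
    | succ j => exact (hgood j).2.2.2.2.2
  -- the set A
  set A : Set ℕ := Set.range m with hA
  have hkey : ∀ j, (3:ℝ)/4 ≤ μ (m j) A := by
    intro j
    set Sf : Finset ℕ := Finset.image m (Finset.range (j+1)) with hSf
    set Tl : Set ℕ := m '' {i | j < i} with hTl
    have hsplit : A = ↑Sf ∪ Tl := by
      ext x
      constructor
      · rintro ⟨i, rfl⟩
        rcases Nat.lt_or_ge j i with h | h
        · exact Or.inr ⟨i, h, rfl⟩
        · exact Or.inl (Finset.mem_coe.2 (Finset.mem_image.2
            ⟨i, Finset.mem_range.2 (by omega), rfl⟩))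
      · rintro (hx | hx)
        · obtain ⟨i, _, rfl⟩ := Finset.mem_image.1 (Finset.mem_coe.1 hx)
          exact ⟨i, rfl⟩
        · obtain ⟨i, _, rfl⟩ := hx
          exact ⟨i, rfl⟩
    have hdisj : Disjoint (↑Sf : Set ℕ) Tl := by
      rw [Set.disjoint_left]
      rintro x hx ⟨i₂, hi₂, rfl⟩
      simp only [Set.mem_setOf_eq] at hi₂
      obtain ⟨i₁, hi₁, he⟩ := Finset.mem_image.1 (Finset.mem_coe.1 hx)
      have : i₁ = i₂ := hmono.injective he
      rw [Finset.mem_range] at hi₁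
      omega
    have hTlsub : Tl ⊆ Rs j := by
      rintro x ⟨i, hi, rfl⟩
      simp only [Set.mem_setOf_eq] at hi
      have : i = j + (i - j - 1) + 1 := by omega
      rw [this]
      exact hmem j (i - j - 1)
    have h1 : μ (m j) A = μ (m j) ↑Sf + μ (m j) Tl := by
      rw [hsplit]; exact hadd _ _ _ hdisj
    have h2 : μ (m j) ↑Sf = 1 := by
      rw [hfin]
      have : m j ∈ Sf := Finset.mem_image.2 ⟨j, Finset.mem_range.2 (by omega), rfl⟩
      simp [this]
    have h3 := abs_le.1 (hsmall j Tl hTlsub)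
    rw [h1, h2]
    linarith [h3.1]
  have hlim : Tendsto (fun j => μ (m j) A) atTop (𝓝 0) :=
    (hten A).comp (hmono.tendsto_atTop)
  have := ge_of_tendsto hlim (Eventually.of_forall hkey)
  linarith

end Phillips
end NotADual
end



/-- A witness for Statement 10: a Banach space over `ℝ` that is not continuously linearly
isomorphic to the dual of any normed space over `ℝ`. -/
structure BanachNotADualWitness : Type 1 where
  /-- The underlying space. -/
  X : Type
  [grp : NormedAddCommGroup X]
  [mod : NormedSpace ℝ X]
  /-- `X` is a Banach space. -/
  complete : CompleteSpace X
  /-- `X` is not isomorphic (via a continuous linear isomorphism) to the dual of any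
  normed space `Y` over `ℝ`. -/
  not_dual : ∀ (Y : Type) [NormedAddCommGroup Y] [NormedSpace ℝ Y],
    IsEmpty (X ≃L[ℝ] StrongDual ℝ Y)

/-- There exists a Banach space `X` over `ℝ` such that for every normed
space `Y` over `ℝ` there is no continuous linear equivalence between `X` and `Y*`.
(A witness is the space `c₀`.) -/
theorem exists_banach_not_a_dual : Nonempty BanachNotADualWitness := by
  refine ⟨{ X := NotADual.c0
            complete := inferInstance
            not_dual := ?_ }⟩
  intro Y _ _
  constructor
  intro T
  exact NotADual.phillips (NotADual.mu T) _
    (fun n A B h => NotADual.mu_union T n A B h)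
    (fun n A => NotADual.abs_mu_le T n A)
    (fun n S => NotADual.mu_finset T n S)
    (fun A => NotADual.tendsto_mu T A)
end

section
/- Let X be a normed space over 𝕜 whose algebraic (Hamel) dimension equals ℵ₀, i.e., Module.rank 𝕜 X = ℵ₀. Then the algebraic dimension of its continuous dual equals the continuum: Module.rank 𝕜 X* = 2^{ℵ₀}. -/
open Cardinal

variable {𝕜 X : Type u} [RCLike 𝕜] [NormedAddCommGroup X] [NormedSpace 𝕜 X]

lemma aux_vanishing (S : Submodule 𝕜 X) [FiniteDimensional 𝕜 S] {x : X} (hx : x ∉ S) :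
    ∃ φ : X →L[𝕜] 𝕜, (∀ y ∈ S, φ y = 0) ∧ φ x = 1 := by
  have hclosed : IsClosed (S : Set X) := Submodule.closed_of_finiteDimensional S
  haveI : IsClosed (S : Set X) := hclosed
  let Q : X →L[𝕜] X ⧸ S := LinearMap.mkContinuous S.mkQ 1
    (fun y => by simpa [Submodule.mkQ_apply] using Submodule.Quotient.norm_mk_le S y)
  have hxQ : (Submodule.Quotient.mk x : X ⧸ S) ≠ 0 := by
    simpa [Submodule.Quotient.mk_eq_zero] using hx
  obtain ⟨g, hg1, hgx⟩ := exists_dual_vector 𝕜 _ (norm_ne_zero_iff.mpr hxQ)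
  have hnorm : ‖(Submodule.Quotient.mk x : X ⧸ S)‖ ≠ 0 := norm_ne_zero_iff.mpr hxQ
  refine ⟨((‖(Submodule.Quotient.mk x : X ⧸ S)‖ : 𝕜))⁻¹ • (g.comp Q), ?_, ?_⟩
  · intro y hy
    have : Q y = 0 := by
      simp only [Q, LinearMap.mkContinuous_apply, Submodule.mkQ_apply,
        Submodule.Quotient.mk_eq_zero]
      exact hy
    simp [this]
  · have hQx : Q x = Submodule.Quotient.mk x := rfl
    simp only [ContinuousLinearMap.smul_apply, ContinuousLinearMap.comp_apply, hQx, hgx]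
    rw [smul_eq_mul, inv_mul_cancel₀]
    exact_mod_cast hnorm

lemma aux_biortho (h : Module.rank 𝕜 X = ℵ₀) :
    ∃ (e : ℕ → X) (f : ℕ → X →L[𝕜] 𝕜), ∀ m n, f m (e n) = if m = n then 1 else 0 := by
  have step : ∀ s : Finset (X × (X →L[𝕜] 𝕜)),
      (∀ x ∈ s, (fun p : X × (X →L[𝕜] 𝕜) => p.2 p.1 = 1) x) →
      ∃ y : X × (X →L[𝕜] 𝕜), y.2 y.1 = 1 ∧ ∀ p ∈ s, p.2 y.1 = 0 ∧ y.2 p.1 = 0 := by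
    intro s _
    classical
    set F : X →ₗ[𝕜] (↑s → 𝕜) :=
      LinearMap.pi (fun p => ((p : X × (X →L[𝕜] 𝕜)).2 : X →ₗ[𝕜] 𝕜)) with hF
    set T : Submodule 𝕜 X := Submodule.span 𝕜 (Prod.fst '' (s : Set (X × (X →L[𝕜] 𝕜)))) with hT
    haveI : FiniteDimensional 𝕜 T :=
      FiniteDimensional.span_of_finite 𝕜 (s.finite_toSet.image _)
    have hrank : Module.rank 𝕜 (LinearMap.range F) + Module.rank 𝕜 (LinearMap.ker F)
        = Module.rank 𝕜 X := F.rank_range_add_rank_ker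
    have hker : ¬ Module.rank 𝕜 (LinearMap.ker F) < ℵ₀ := by
      intro hlt
      have h1 : Module.rank 𝕜 (LinearMap.range F) < ℵ₀ :=
        lt_of_le_of_lt (Submodule.rank_le _) (Module.rank_lt_aleph0 𝕜 _)
      have := Cardinal.add_lt_aleph0 h1 hlt
      rw [hrank, h] at this
      exact lt_irrefl _ this
    have hnle : ¬ (LinearMap.ker F ≤ T) := by
      intro hle
      exact hker (lt_of_le_of_lt (Submodule.rank_mono hle) (Module.rank_lt_aleph0 𝕜 _))
    obtain ⟨x, hxK, hxT⟩ := SetLike.not_le_iff_exists.mp hnle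
    obtain ⟨φ, hφ0, hφx⟩ := aux_vanishing T hxT
    refine ⟨(x, φ), hφx, fun p hp => ⟨?_, ?_⟩⟩
    · have h2 := LinearMap.mem_ker.mp hxK
      have h3 := congrFun h2 ⟨p, hp⟩
      simpa [hF] using h3
    · exact hφ0 _ (Submodule.subset_span ⟨p, hp, rfl⟩)
  obtain ⟨q, hP, hr⟩ := exists_seq_of_forall_finset_exists
      (fun p : X × (X →L[𝕜] 𝕜) => p.2 p.1 = 1)
      (fun p q => p.2 q.1 = 0 ∧ q.2 p.1 = 0) step
  refine ⟨fun n => (q n).1, fun n => (q n).2, fun m n => ?_⟩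
  rcases lt_trichotomy m n with hmn | rfl | hmn
  · simp [hmn.ne, (hr m n hmn).1]
  · simp [hP m]
  · simp [hmn.ne', (hr n m hmn).2]

lemma aux_lower (h : Module.rank 𝕜 X = ℵ₀) :
    (𝔠 : Cardinal.{u}) ≤ Module.rank 𝕜 (StrongDual 𝕜 X) := by
  obtain ⟨e, f, hef⟩ := aux_biortho h
  have hfe1 : ∀ n, f n (e n) = 1 := fun n => by simpa using hef n n
  have hfpos : ∀ n, 0 < ‖f n‖ := by
    intro n
    rcases eq_or_lt_of_le (norm_nonneg (f n)) with h0 | h0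
    · exfalso
      have hz : f n = 0 := by
        rw [← norm_eq_zero]; exact h0.symm
      have h1 := hfe1 n
      rw [hz] at h1
      simpa using h1.symm
    · exact h0
  -- the summand
  set a : Set.Ioo (0:ℝ) 1 → ℕ → StrongDual 𝕜 X := fun t n =>
    (((t : ℝ)^n / (‖f n‖ * 2^n) : ℝ) : 𝕜) • f n with ha
  have hnorm : ∀ (t : Set.Ioo (0:ℝ) 1) n, ‖a t n‖ ≤ (1/2)^n := by
    intro t n
    have ht0 : (0:ℝ) < t := t.2.1
    have ht1 : (t:ℝ) < 1 := t.2.2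
    have hcoef : (0:ℝ) ≤ (t : ℝ)^n / (‖f n‖ * 2^n) := by positivity
    rw [ha]
    simp only [norm_smul, RCLike.norm_ofReal, abs_of_nonneg hcoef]
    rw [div_mul_eq_mul_div, mul_comm, ← div_mul_eq_mul_div]
    calc ‖f n‖ / (‖f n‖ * 2 ^ n) * (t:ℝ) ^ n ≤ ‖f n‖ / (‖f n‖ * 2 ^ n) * 1 := by
          apply mul_le_mul_of_nonneg_left (pow_le_one₀ ht0.le ht1.le) (by positivity)
      _ = (1/2)^n := by
          rw [mul_one, div_mul_eq_div_div, div_self (hfpos n).ne', one_div, ← inv_pow]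
          simp
  have hsum : ∀ t : Set.Ioo (0:ℝ) 1, Summable (a t) := by
    intro t
    apply Summable.of_norm_bounded ?_ (hnorm t)
    exact summable_geometric_of_lt_one (by norm_num) (by norm_num)
  set g : Set.Ioo (0:ℝ) 1 → StrongDual 𝕜 X := fun t => ∑' n, a t n with hg
  have heval : ∀ (t : Set.Ioo (0:ℝ) 1) (k : ℕ),
      g t (e k) = (((t : ℝ)^k / (‖f k‖ * 2^k) : ℝ) : 𝕜) := by
    intro t k
    have := (ContinuousLinearMap.apply 𝕜 𝕜 (e k)).map_tsum (hsum t)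
    have h2 : g t (e k) = ∑' n, (a t n) (e k) := this
    rw [h2]
    have h3 : ∀ n, (a t n) (e k) =
        if n = k then (((t : ℝ)^k / (‖f k‖ * 2^k) : ℝ) : 𝕜) else 0 := by
      intro n
      rw [ha]
      simp only [ContinuousLinearMap.smul_apply, hef n k, smul_eq_mul, mul_ite, mul_one, mul_zero]
      by_cases hnk : n = k
      · subst hnk; simp
      · simp [hnk]
    rw [tsum_congr h3, tsum_ite_eq]
  -- the comparison linear map
  set ev : ∀ _ : ℕ, StrongDual 𝕜 X →ₗ[𝕜] 𝕜 := fun n =>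
    { toFun := fun φ => φ (e n)
      map_add' := fun φ ψ => rfl
      map_smul' := fun c φ => rfl }
  set Ψ : StrongDual 𝕜 X →ₗ[𝕜] (ℕ → 𝕜) :=
    LinearMap.pi (fun n => ((‖f n‖ * 2^n : ℝ) : 𝕜) • ev n) with hΨ
  have hΨg : ∀ t : Set.Ioo (0:ℝ) 1, Ψ (g t) = fun n => (((t:ℝ) : 𝕜))^n := by
    intro t
    funext n
    have hne : (‖f n‖ * 2^n : ℝ) ≠ 0 := (mul_pos (hfpos n) (by positivity)).ne'
    simp only [hΨ, LinearMap.pi_apply, LinearMap.smul_apply, LinearMap.coe_mk, AddHom.coe_mk,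
      ev, heval t n, smul_eq_mul]
    rw [← RCLike.ofReal_mul, mul_div_cancel₀ _ hne, RCLike.ofReal_pow]
  -- shift operator
  set T : (ℕ → 𝕜) →ₗ[𝕜] (ℕ → 𝕜) :=
    { toFun := fun b n => b (n+1)
      map_add' := fun b c => rfl
      map_smul' := fun c b => rfl } with hT
  have hli : LinearIndependent 𝕜 (fun t : Set.Ioo (0:ℝ) 1 => fun n => (((t:ℝ) : 𝕜))^n) := by
    apply Module.End.eigenvectors_linearIndependent' T (fun t : Set.Ioo (0:ℝ) 1 => ((t:ℝ) : 𝕜))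
    · intro s t hst
      exact Subtype.coe_injective (RCLike.ofReal_injective hst)
    · intro t
      constructor
      · rw [Module.End.mem_eigenspace_iff]
        funext n
        simp [hT, pow_succ, mul_comm]
      · intro h0
        have := congrFun h0 0
        simpa using this
  have hgli : LinearIndependent 𝕜 g := by
    apply LinearIndependent.of_comp Ψ
    have : Ψ ∘ g = fun t : Set.Ioo (0:ℝ) 1 => fun n => (((t:ℝ) : 𝕜))^n := funext hΨg
    rw [this]
    exact hli
  have := hgli.cardinal_lift_le_rank
  rw [Cardinal.mk_Ioo_real (by norm_num : (0:ℝ) < 1), Cardinal.lift_continuum] at this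
  simpa using this

lemma aux_mk_K_le : #𝕜 ≤ (𝔠 : Cardinal.{u}) := by
  set n := Module.finrank ℝ 𝕜 with hn
  have b := Module.finBasis ℝ 𝕜
  have hequiv : Cardinal.lift.{0} #𝕜 = Cardinal.lift.{u} #(Fin n → ℝ) :=
    Cardinal.lift_mk_eq'.mpr ⟨b.equivFun.toEquiv⟩
  have h1 : #(Fin n → ℝ) ≤ (𝔠 : Cardinal.{0}) := by
    rw [← Cardinal.power_def, Cardinal.mk_real, Cardinal.mk_fin]
    calc (𝔠 : Cardinal.{0}) ^ (n : Cardinal.{0}) ≤ 𝔠 ^ (ℵ₀ : Cardinal.{0}) :=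
          Cardinal.power_le_power_left Cardinal.continuum_ne_zero (Cardinal.nat_lt_aleph0 n).le
      _ = 𝔠 := Cardinal.continuum_power_aleph0
  calc #𝕜 = Cardinal.lift.{0} #𝕜 := by simp
    _ = Cardinal.lift.{u} #(Fin n → ℝ) := hequiv
    _ ≤ Cardinal.lift.{u} (𝔠 : Cardinal.{0}) := Cardinal.lift_le.mpr h1
    _ = 𝔠 := Cardinal.lift_continuum

lemma aux_upper (h : Module.rank 𝕜 X = ℵ₀) :
    Module.rank 𝕜 (StrongDual 𝕜 X) ≤ (𝔠 : Cardinal.{u}) := by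
  -- X is separable
  set b := Module.Basis.ofVectorSpace 𝕜 X with hb
  have hcard : #(Module.Basis.ofVectorSpaceIndex 𝕜 X) = ℵ₀ := by
    rw [b.mk_eq_rank'', h]
  haveI : Countable (Module.Basis.ofVectorSpaceIndex 𝕜 X) :=
    Cardinal.mk_le_aleph0_iff.mp hcard.le
  have hsep : TopologicalSpace.IsSeparable
      ((Submodule.span 𝕜 (Set.range (b : _ → X))) : Set X) :=
    (Set.countable_range (b : _ → X)).isSeparable.span
  rw [b.span_eq] at hsep
  haveI : TopologicalSpace.SeparableSpace X := by
    rw [← TopologicalSpace.isSeparable_univ_iff]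
    simpa using hsep
  obtain ⟨D, hDcount, hDdense⟩ := TopologicalSpace.exists_countable_dense X
  haveI : Countable D := hDcount.to_subtype
  -- restriction to D is injective
  have hinj : Function.Injective
      (fun (φ : StrongDual 𝕜 X) => (fun d : D => φ d)) := by
    intro φ ψ hφψ
    apply ContinuousLinearMap.ext
    have heq : ⇑φ = ⇑ψ := by
      apply Continuous.ext_on hDdense φ.continuous ψ.continuous
      intro x hx
      exact congrFun hφψ ⟨x, hx⟩
    exact fun x => congrFun heq x
  have hmk : #(StrongDual 𝕜 X) ≤ #(D → 𝕜) := Cardinal.mk_le_of_injective hinj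
  have h2 : #(D → 𝕜) ≤ (𝔠 : Cardinal.{u}) := by
    rw [← Cardinal.power_def]
    calc #𝕜 ^ #D ≤ (𝔠 : Cardinal.{u}) ^ #D :=
          Cardinal.power_le_power_right aux_mk_K_le
      _ ≤ (𝔠 : Cardinal.{u}) ^ (ℵ₀ : Cardinal.{u}) :=
          Cardinal.power_le_power_left Cardinal.continuum_ne_zero
            (Cardinal.mk_le_aleph0_iff.mpr inferInstance)
      _ = 𝔠 := Cardinal.continuum_power_aleph0
  exact (rank_le_card _ _).trans (hmk.trans h2)


/-- If a normed space `X` over `𝕜 ∈ {ℝ, ℂ}` has algebraic (Hamel) dimension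
exactly `ℵ₀`, then its continuous dual `X*` has algebraic dimension `2 ^ ℵ₀`. -/
theorem rank_dual_of_rank_aleph0 {𝕜 X : Type u} [RCLike 𝕜]
    [NormedAddCommGroup X] [NormedSpace 𝕜 X]
    (h : Module.rank 𝕜 X = ℵ₀) :
    Module.rank 𝕜 (StrongDual 𝕜 X) = 2 ^ (ℵ₀ : Cardinal.{u}) := by
  rw [Cardinal.two_power_aleph0]
  exact le_antisymm (aux_upper h) (aux_lower h)
end

section
/- Let X be a normed space over 𝕜 with algebraic (Hamel) dimension Module.rank 𝕜 X = ℵ₀, and let Y be a nontrivial finite-dimensional normed space over 𝕜. Then the normed space L(X,Y) of continuous linear maps from X to Y satisfies both card L(X,Y) = 2^{ℵ₀} and Module.rank 𝕜 L(X,Y) = 2^{ℵ₀}. -/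
open Cardinal

universe u

/-- Auxiliary: if `X` has a countable Hamel basis, the continuous dual contains a
linearly independent family indexed by `Set.Ioo (0:ℝ) 1`. -/
theorem exists_linearIndependent_dual_family {𝕜 X : Type u} [RCLike 𝕜]
    [NormedAddCommGroup X] [NormedSpace 𝕜 X] (b : Module.Basis ℕ 𝕜 X) :
    ∃ G : Set.Ioo (0:ℝ) 1 → (X →L[𝕜] 𝕜), LinearIndependent 𝕜 G := by
  classical
  -- biorthogonal-ish functionals
  have hfin : ∀ n : ℕ, FiniteDimensional 𝕜 (Submodule.span 𝕜 (b '' Set.Iic n)) := fun n =>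
    FiniteDimensional.span_of_finite 𝕜 ((Set.finite_Iic n).image b)
  have hex : ∀ n : ℕ, ∃ g : X →L[𝕜] 𝕜,
      (∀ x : (Submodule.span 𝕜 (b '' Set.Iic n)),
        g x = ((b.coord n).comp (Submodule.span 𝕜 (b '' Set.Iic n)).subtype) x) ∧ True := by
    intro n
    haveI := hfin n
    obtain ⟨g, hg, -⟩ := exists_extension_norm_eq (Submodule.span 𝕜 (b '' Set.Iic n))
      (LinearMap.toContinuousLinearMap ((b.coord n).comp
        (Submodule.span 𝕜 (b '' Set.Iic n)).subtype))
    exact ⟨g, fun x => by simpa using hg x, trivial⟩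
  choose f hf _ using hex
  have key : ∀ n k : ℕ, k ≤ n → f n (b k) = if k = n then 1 else 0 := by
    intro n k hk
    have hmem : b k ∈ Submodule.span 𝕜 (b '' Set.Iic n) :=
      Submodule.subset_span ⟨k, hk, rfl⟩
    have := hf n ⟨b k, hmem⟩
    simp only [LinearMap.comp_apply, Submodule.subtype_apply] at this
    rw [this, Module.Basis.coord_apply, Module.Basis.repr_self, Finsupp.single_apply]
  -- coefficients
  set c : ℕ → ℝ := fun n => ((2:ℝ)^n * (1 + ‖f n‖))⁻¹ with hc
  have hcpos : ∀ n, 0 < c n := by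
    intro n
    have : (0:ℝ) < 1 + ‖f n‖ := by positivity
    positivity
  have hsummable : ∀ t : ℝ, t ∈ Set.Ioo (0:ℝ) 1 →
      Summable (fun n => (((t^n * c n : ℝ)) : 𝕜) • f n) := by
    intro t ht
    apply Summable.of_norm_bounded
      (summable_geometric_of_lt_one (by norm_num : (0:ℝ) ≤ 1/2) (by norm_num))
    intro n
    rw [norm_smul (((t^n * c n : ℝ)) : 𝕜) (f n), RCLike.norm_ofReal]
    have h1 : (0:ℝ) < 1 + ‖f n‖ := by positivity
    have hc2 : c n * (1 + ‖f n‖) = (1/2)^n := by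
      rw [hc]; field_simp; rw [← mul_pow]; norm_num
    have ht0 : (0:ℝ) ≤ t := ht.1.le
    have htn : t^n ≤ 1 := pow_le_one₀ ht0 ht.2.le
    have habs : |t^n * c n| = t^n * c n := abs_of_nonneg (by positivity)
    calc |t ^ n * c n| * ‖f n‖ = t^n * (c n * ‖f n‖) := by rw [habs]; ring
      _ ≤ 1 * (c n * (1 + ‖f n‖)) := by
          apply mul_le_mul htn ?_ (by positivity) one_pos.le
          have := (hcpos n).le
          nlinarith [norm_nonneg (f n)]
      _ = (1/2)^n := by rw [one_mul, hc2]
  set G : Set.Ioo (0:ℝ) 1 → (X →L[𝕜] 𝕜) :=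
    fun t => ∑' n, (((t:ℝ)^n * c n : ℝ) : 𝕜) • f n with hG
  refine ⟨G, ?_⟩
  -- evaluation at basis vectors
  have heval : ∀ t : Set.Ioo (0:ℝ) 1, ∀ k : ℕ,
      G t (b k) = ∑ n ∈ Finset.range (k+1), (((t:ℝ)^n * c n : ℝ) : 𝕜) * f n (b k) := by
    intro t k
    have h1 := (ContinuousLinearMap.apply 𝕜 𝕜 (b k)).map_tsum (hsummable t t.2)
    simp only [ContinuousLinearMap.apply_apply, ContinuousLinearMap.smul_apply,
      smul_eq_mul] at h1
    rw [hG]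
    rw [h1]
    apply tsum_eq_sum
    intro n hn
    have hkn : k < n := by
      by_contra h
      exact hn (Finset.mem_range.2 (Nat.lt_succ_of_le (not_lt.1 h)))
    rw [key n k hkn.le, if_neg hkn.ne, mul_zero]
  -- linear map to sequences
  let φ : (X →L[𝕜] 𝕜) →ₗ[𝕜] (ℕ → 𝕜) :=
    { toFun := fun h k => h (b k)
      map_add' := fun p q => by ext k; simp
      map_smul' := fun a p => by ext k; simp }
  apply LinearIndependent.of_comp φ
  rw [linearIndependent_iff']
  intro s w hsum i hi
  set m := s.card with hm
  set τ : Fin m → (Set.Ioo (0:ℝ) 1) := fun j => (s.equivFin.symm j : Set.Ioo (0:ℝ) 1) with hτ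
  have hτmem : ∀ j, τ j ∈ s := fun j => (s.equivFin.symm j).2
  have hτinj : Function.Injective τ :=
    Subtype.val_injective.comp s.equivFin.symm.injective
  set tv : Fin m → 𝕜 := fun j => ((τ j : ℝ) : 𝕜) with htv
  have htvinj : Function.Injective tv := by
    intro a a' h
    have h2 : ((τ a : ℝ)) = ((τ a' : ℝ)) := RCLike.ofReal_injective h
    exact hτinj (Subtype.val_injective h2)
  set Γ : Matrix (Fin m) (Fin m) 𝕜 :=
    fun n k => if (n:ℕ) ≤ (k:ℕ) then (c n : 𝕜) * f n (b k) else 0 with hΓ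
  set A : Matrix (Fin m) (Fin m) 𝕜 := Matrix.vandermonde tv * Γ with hA
  have hAval : ∀ j k : Fin m, A j k = G (τ j) (b k) := by
    intro j k
    rw [hA, Matrix.mul_apply, heval]
    have step1 : ∀ (n : ℕ) (hn : n < m),
        Matrix.vandermonde tv j ⟨n, hn⟩ * Γ ⟨n, hn⟩ k
          = (if n ≤ (k:ℕ) then ((τ j : ℝ) : 𝕜)^n * ((c n : 𝕜) * f n (b k)) else 0) := by
      intro n hn
      rw [Matrix.vandermonde_apply, hΓ]
      by_cases h : n ≤ (k:ℕ) <;> simp [h, htv]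
    calc ∑ n : Fin m, Matrix.vandermonde tv j n * Γ n k
        = ∑ n ∈ Finset.range m, (if n ≤ (k:ℕ) then ((τ j : ℝ) : 𝕜)^n * ((c n : 𝕜) * f n (b k)) else 0) := by
          rw [← Fin.sum_univ_eq_sum_range
            (fun n => (if n ≤ (k:ℕ) then ((τ j : ℝ) : 𝕜)^n * ((c n : 𝕜) * f n (b k)) else 0)) m]
          apply Finset.sum_congr rfl
          intro n _
          have := step1 (n:ℕ) n.2
          simpa using this
      _ = ∑ n ∈ Finset.range (k+1), (((τ j : ℝ)^n * c n : ℝ) : 𝕜) * f n (b k) := by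
          rw [← Finset.sum_subset (Finset.range_subset_range.2 (by omega : (k:ℕ)+1 ≤ m))]
          · apply Finset.sum_congr rfl
            intro n hn
            have hnk : n ≤ (k:ℕ) := Nat.lt_succ_iff.1 (Finset.mem_range.1 hn)
            rw [if_pos hnk]
            push_cast
            ring
          · intro n _ hn
            have : ¬ n ≤ (k:ℕ) := fun h => hn (Finset.mem_range.2 (Nat.lt_succ_of_le h))
            rw [if_neg this]
  -- the vector of coefficients annihilates A
  have hvec : Matrix.vecMul (fun j => w (τ j)) A = 0 := by
    ext k
    have hk := congrFun hsum (k : ℕ)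
    simp only [Finset.sum_apply, Pi.smul_apply, Pi.zero_apply, smul_eq_mul] at hk
    have : ∀ j : Fin m, w (τ j) * A j k = w (τ j) * (φ (G (τ j))) (k:ℕ) := by
      intro j; rw [hAval]; rfl
    calc Matrix.vecMul (fun j => w (τ j)) A k
        = ∑ j : Fin m, w (τ j) * A j k := by
          simp [Matrix.vecMul, dotProduct]
      _ = ∑ j : Fin m, w (τ j) * (φ (G (τ j))) (k:ℕ) := Finset.sum_congr rfl (fun j _ => this j)
      _ = ∑ x : s, w x * (φ (G x)) (k:ℕ) :=
          Equiv.sum_comp s.equivFin.symm (fun x : s => w x * (φ (G x)) (k:ℕ))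
      _ = ∑ x ∈ s, w x * (φ (G x)) (k:ℕ) :=
          Finset.sum_coe_sort s (fun x => w x * (φ (G x)) (k:ℕ))
      _ = 0 := hk
  -- determinant nonzero
  have hdet : A.det ≠ 0 := by
    rw [hA, Matrix.det_mul]
    apply mul_ne_zero
    · rw [Matrix.det_vandermonde]
      apply Finset.prod_ne_zero_iff.2
      intro i _
      apply Finset.prod_ne_zero_iff.2
      intro j hj
      have : i ≠ j := (Finset.mem_Ioi.1 hj).ne
      exact sub_ne_zero_of_ne (fun h => this (htvinj h.symm))
    · have htri : Γ.BlockTriangular id := by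
        intro i j hij
        rw [hΓ]
        simp only
        rw [if_neg]
        exact not_le.2 hij
      rw [Matrix.det_of_upperTriangular htri]
      apply Finset.prod_ne_zero_iff.2
      intro k _
      simp only [hΓ]
      rw [if_pos le_rfl, key k k le_rfl, if_pos rfl, mul_one]
      exact RCLike.ofReal_ne_zero.2 (hcpos k).ne'
  have hw0 : (fun j => w (τ j)) = 0 := Matrix.eq_zero_of_vecMul_eq_zero hdet hvec
  have : w (τ (s.equivFin ⟨i, hi⟩)) = 0 := congrFun hw0 _
  simpa [hτ] using this
/-- Let `X` be a normed space over `𝕜 ∈ {ℝ, ℂ}` with algebraic (Hamel)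
dimension `ℵ₀`, and let `Y` be a nontrivial finite-dimensional normed space over `𝕜`. Then the
space `L(X,Y)` of continuous linear maps satisfies `card L(X,Y) = 2 ^ ℵ₀` and
`Module.rank 𝕜 L(X,Y) = 2 ^ ℵ₀`. -/
theorem card_and_rank_CLM_of_rank_aleph0 {𝕜 X Y : Type u} [RCLike 𝕜]
    [NormedAddCommGroup X] [NormedSpace 𝕜 X]
    [NormedAddCommGroup Y] [NormedSpace 𝕜 Y] [Nontrivial Y] [FiniteDimensional 𝕜 Y]
    (hX : Module.rank 𝕜 X = ℵ₀) :
    Cardinal.mk (X →L[𝕜] Y) = 2 ^ (ℵ₀ : Cardinal.{u}) ∧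
    Module.rank 𝕜 (X →L[𝕜] Y) = 2 ^ (ℵ₀ : Cardinal.{u}) := by
  classical
  -- `X` has a Hamel basis indexed by `ℕ`
  obtain ⟨b⟩ : Nonempty (Module.Basis ℕ 𝕜 X) := by
    have hmk : #(Module.Basis.ofVectorSpaceIndex 𝕜 X) = ℵ₀ := by
      rw [(Module.Basis.ofVectorSpace 𝕜 X).mk_eq_rank'', hX]
    have : Cardinal.lift.{0} #(Module.Basis.ofVectorSpaceIndex 𝕜 X) = Cardinal.lift.{u} #ℕ := by
      simp [hmk]
    obtain ⟨e⟩ := Cardinal.lift_mk_eq'.1 this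
    exact ⟨(Module.Basis.ofVectorSpace 𝕜 X).reindex e⟩
  obtain ⟨y₀, hy₀⟩ := exists_ne (0 : Y)
  -- a linearly independent family of continuum many functionals
  obtain ⟨G, hG⟩ := exists_linearIndependent_dual_family b
  -- push it into `X →L[𝕜] Y` using `y₀`
  let S : (X →L[𝕜] 𝕜) →ₗ[𝕜] (X →L[𝕜] Y) :=
    { toFun := fun h => h.smulRight y₀
      map_add' := fun p q => by ext x; simp [add_smul]
      map_smul' := fun a p => by ext x; simp [mul_smul] }
  have hSker : LinearMap.ker S = ⊥ := by
    rw [LinearMap.ker_eq_bot]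
    intro p q hpq
    ext x
    have : p x • y₀ = q x • y₀ := by
      have := congrArg (fun (h : X →L[𝕜] Y) => h x) hpq
      simpa [S] using this
    have h2 : (p x - q x) • y₀ = 0 := by rw [sub_smul, this, sub_self]
    rcases smul_eq_zero.1 h2 with h | h
    · exact sub_eq_zero.1 h
    · exact absurd h hy₀
  have hGL : LinearIndependent 𝕜 (⇑S ∘ G) := hG.map' S hSker
  -- lower bound for the rank
  have hrank_ge : (2 ^ (ℵ₀ : Cardinal.{u})) ≤ Module.rank 𝕜 (X →L[𝕜] Y) := by
    have h1 := hGL.cardinal_lift_le_rank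
    rw [Cardinal.mk_Ioo_real (by norm_num : (0:ℝ) < 1)] at h1
    rw [Cardinal.lift_continuum, Cardinal.lift_uzero] at h1
    rwa [Cardinal.two_power_aleph0]
  -- upper bound for the cardinality
  have hk : #𝕜 ≤ (𝔠 : Cardinal.{u}) := by
    have e := (Module.finBasis ℝ 𝕜).equivFun
    have h1 : Cardinal.lift.{0} #𝕜 = Cardinal.lift.{u} #(Fin (Module.finrank ℝ 𝕜) → ℝ) :=
      Cardinal.lift_mk_eq'.2 ⟨e.toEquiv⟩
    have h2 : #(Fin (Module.finrank ℝ 𝕜) → ℝ) ≤ (𝔠 : Cardinal.{0}) := by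
      rw [← Cardinal.power_def, Cardinal.mk_real, Cardinal.mk_fin]
      calc (𝔠 : Cardinal.{0}) ^ (Module.finrank ℝ 𝕜 : Cardinal.{0})
          ≤ 𝔠 ^ (ℵ₀ : Cardinal.{0}) :=
            Cardinal.power_le_power_left Cardinal.continuum_ne_zero
              (Cardinal.nat_lt_aleph0 _).le
        _ = 𝔠 := Cardinal.continuum_power_aleph0
    rw [Cardinal.lift_uzero] at h1
    calc #𝕜 = Cardinal.lift.{u} #(Fin (Module.finrank ℝ 𝕜) → ℝ) := h1
      _ ≤ Cardinal.lift.{u} (𝔠 : Cardinal.{0}) := Cardinal.lift_le.2 h2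
      _ = 𝔠 := Cardinal.lift_continuum
  have hY : #Y ≤ (𝔠 : Cardinal.{u}) := by
    have e := (Module.finBasis 𝕜 Y).equivFun
    have h1 : #Y = #(Fin (Module.finrank 𝕜 Y) → 𝕜) := Cardinal.mk_congr e.toEquiv
    rw [h1, Cardinal.mk_arrow, Cardinal.lift_uzero]
    have hfin : Cardinal.lift.{u} #(Fin (Module.finrank 𝕜 Y)) ≤ (ℵ₀ : Cardinal.{u}) := by
      rw [Cardinal.mk_fin, Cardinal.lift_natCast]
      exact (Cardinal.nat_lt_aleph0 _).le
    calc #𝕜 ^ Cardinal.lift.{u} #(Fin (Module.finrank 𝕜 Y))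
        ≤ 𝔠 ^ (ℵ₀ : Cardinal.{u}) :=
          (Cardinal.power_le_power_right hk).trans
            (Cardinal.power_le_power_left Cardinal.continuum_ne_zero hfin)
      _ = 𝔠 := Cardinal.continuum_power_aleph0
  have hcard_le : #(X →L[𝕜] Y) ≤ (2 ^ (ℵ₀ : Cardinal.{u})) := by
    have hinj : Function.Injective (fun (h : X →L[𝕜] Y) => (fun n => h (b n) : ℕ → Y)) := by
      intro p q hpq
      apply ContinuousLinearMap.coe_injective
      exact b.ext (fun i => congrFun hpq i)
    have h1 : #(X →L[𝕜] Y) ≤ #(ℕ → Y) := Cardinal.mk_le_of_injective hinj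
    have h2 : #(ℕ → Y) ≤ (𝔠 : Cardinal.{u}) := by
      rw [Cardinal.mk_arrow, Cardinal.lift_uzero]
      have : Cardinal.lift.{u} #ℕ = (ℵ₀ : Cardinal.{u}) := by simp
      rw [this]
      calc #Y ^ (ℵ₀ : Cardinal.{u}) ≤ 𝔠 ^ (ℵ₀ : Cardinal.{u}) :=
            Cardinal.power_le_power_right hY
        _ = 𝔠 := Cardinal.continuum_power_aleph0
    rw [Cardinal.two_power_aleph0]
    exact h1.trans h2
  have hrank_le : Module.rank 𝕜 (X →L[𝕜] Y) ≤ (2 ^ (ℵ₀ : Cardinal.{u})) :=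
    (rank_le_card _ _).trans hcard_le
  have hcard_ge : (2 ^ (ℵ₀ : Cardinal.{u})) ≤ #(X →L[𝕜] Y) :=
    hrank_ge.trans (rank_le_card _ _)
  exact ⟨le_antisymm hcard_le hcard_ge, le_antisymm hrank_le hrank_ge⟩
end
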